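/- (Quadratic growth from the coercivity-type Assumption 4.) Let $\bar u\in U_{ad}$ satisfy the first-order optimality conditions ($J'(\bar u)(u-\bar u)\ge0$ for all $u\in U_{ad}$) and suppose there exist $\alpha,\gamma>0$ with $J'(\bar u)(u-\bar u)+J''(\bar u)(u-\bar u)^2\ge\gamma\|z_{\bar u,u-\bar u}\|^2_{L^2(\Omega)}$ for all $u\in U_{ad}$ with $\|y_u-\bar y\|_{C(\bar\Omega)}<\alpha$. Then there exist $\varepsilon>0$ and $\kappa>0$ such that $J(\bar u)+\frac{\kappa}{2}\|y_u-\bar y\|^2_{L^2(\Omega)}\le J(u)$ for all $u\in U_{ad}$ with $\|y_u-\bar y\|_{C(\bar\Omega)}<\varepsilon$; in particular $\bar u$ is a strict strong local minimizer. -/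

import Mathlib

open MeasureTheory ENNReal Filter

/-- `L^p`-type norm (`p = ∞` gives the `C(Ω̄)` sup-norm). -/
noncomputable def nrm {Ω : Type*} [MeasurableSpace Ω] (μ : Measure Ω) (p : ℝ≥0∞)
    (f : Ω → ℝ) : ℝ := (eLpNorm f p μ).toReal

/-- The admissible set `U_{ad} = {u ∈ L²(Ω) : u_a ≤ u(x) ≤ u_b a.e.}`. -/
def Uad {Ω : Type*} [MeasurableSpace Ω] (μ : Measure Ω) (ua ub : ℝ) : Set (Ω → ℝ) :=
  {u | MemLp u 2 μ ∧ ∀ᵐ x ∂μ, ua ≤ u x ∧ u x ≤ ub}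

/-- **Quadratic growth (Theorem 3.3).** If `ū ∈ U_{ad}` satisfies the first-order
optimality condition and Assumption 4
(`J'(ū)(u-ū) + J''(ū)(u-ū)² ≥ γ‖z_{ū,u-ū}‖²_{L²}` for admissible `u` with
`‖y_u - ȳ‖_{C(Ω̄)} < α`), then there are `ε, κ > 0` with
`J(ū) + (κ/2)‖y_u - ȳ‖²_{L²} ≤ J(u)` for all `u ∈ U_{ad}` with
`‖y_u - ȳ‖_{C(Ω̄)} < ε`. -/
theorem quadratic_growth
    {Ω : Type*} [MeasurableSpace Ω] (μ : Measure Ω) [IsFiniteMeasure μ]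
    (ua ub : ℝ) (hab : ua < ub)
    (J : (Ω → ℝ) → ℝ)
    (J1 J2 : (Ω → ℝ) → (Ω → ℝ) → ℝ)  -- J' and the quadratic form v ↦ J''(u)v²
    (Y : (Ω → ℝ) → (Ω → ℝ)) (Z : (Ω → ℝ) → (Ω → ℝ) → (Ω → ℝ))
    (ubar : Ω → ℝ) (hubar : ubar ∈ Uad μ ua ub)
    -- first-order optimality condition
    (hfoc : ∀ u ∈ Uad μ ua ub, 0 ≤ J1 ubar (u - ubar))
    -- Assumption 4
    (α γ : ℝ) (hα : 0 < α) (hγ : 0 < γ)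
    (hA4 : ∀ u ∈ Uad μ ua ub, nrm μ ⊤ (Y u - Y ubar) < α →
      γ * (nrm μ 2 (Z ubar (u - ubar))) ^ 2 ≤
        J1 ubar (u - ubar) + J2 ubar (u - ubar))
    -- Taylor expansion of J with intermediate point
    (htaylor : ∀ u ∈ Uad μ ua ub, ∃ θ ∈ Set.Icc (0:ℝ) 1,
      J u = J ubar + J1 ubar (u - ubar) +
        1/2 * J2 (ubar + θ • (u - ubar)) (u - ubar))
    -- key technical input (Lemma 3.3): uniform continuity of J'' near ū
    (hJ2cont : ∀ ρ > (0:ℝ), ∃ ε > (0:ℝ), ∀ u ∈ Uad μ ua ub,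
      nrm μ ⊤ (Y u - Y ubar) < ε → ∀ v : Ω → ℝ, ∀ θ ∈ Set.Icc (0:ℝ) 1,
        |J2 (ubar + θ • (u - ubar)) v - J2 ubar v| ≤ ρ * (nrm μ 2 (Z ubar v)) ^ 2)
    -- norm equivalence near ū
    (hequiv : ∃ ε > (0:ℝ), ∀ u ∈ Uad μ ua ub, nrm μ ⊤ (Y u - Y ubar) < ε →
      1/2 * nrm μ 2 (Y u - Y ubar) ≤ nrm μ 2 (Z ubar (u - ubar))) :
    ∃ ε > (0:ℝ), ∃ κ > (0:ℝ), ∀ u ∈ Uad μ ua ub,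
      nrm μ ⊤ (Y u - Y ubar) < ε →
      J ubar + κ/2 * (nrm μ 2 (Y u - Y ubar)) ^ 2 ≤ J u := by
  obtain ⟨ε1, hε1, hcont⟩ := hJ2cont (γ/2) (by linarith)
  obtain ⟨ε2, hε2, heq⟩ := hequiv
  refine ⟨min α (min ε1 ε2), by positivity, γ/8, by positivity, ?_⟩
  intro u hu hlt
  have hltα : nrm μ ⊤ (Y u - Y ubar) < α := lt_of_lt_of_le hlt (min_le_left _ _)
  have hlt1 : nrm μ ⊤ (Y u - Y ubar) < ε1 :=
    lt_of_lt_of_le hlt (le_trans (min_le_right _ _) (min_le_left _ _))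
  have hlt2 : nrm μ ⊤ (Y u - Y ubar) < ε2 :=
    lt_of_lt_of_le hlt (le_trans (min_le_right _ _) (min_le_right _ _))
  obtain ⟨θ, hθ, hT⟩ := htaylor u hu
  set Zn := nrm μ 2 (Z ubar (u - ubar)) with hZn
  set Yn := nrm μ 2 (Y u - Y ubar) with hYn
  have hA := hA4 u hu hltα
  have hF := hfoc u hu
  have hC := hcont u hu hlt1 (u - ubar) θ hθ
  have habs : J2 ubar (u - ubar) - γ/2 * Zn ^ 2 ≤ J2 (ubar + θ • (u - ubar)) (u - ubar) := by
    have := abs_le.mp hC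
    linarith [this.1]
  have hstep : J ubar + γ/4 * Zn ^ 2 ≤ J u := by
    rw [hT]
    nlinarith
  have hYZ : 1/2 * Yn ≤ Zn := heq u hu hlt2
  have hY0 : 0 ≤ Yn := ENNReal.toReal_nonneg
  have : (1/2 * Yn) ^ 2 ≤ Zn ^ 2 := by
    apply pow_le_pow_left₀ (by positivity) hYZ
  nlinarith
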